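/- Let y > 0 and set x so that y and x are related by y = π K'(x)/K(x) with z = ₂F₁(1/2,1/2;1;x) and z' = dz/dx. Treating y as a function of x, one has dy/dx = -1/(x(1-x)z^2), and consequently ∑_{n≥1} n^{2p} cosh(ny)/sinh(ny)^2 = x(1-x) z^2 · d/dx [ ∑_{n≥1} n^{2p-1}/sinh(ny) ] for every positive integer p. -/

import Mathlib

open scoped BigOperators

/-- Real Pochhammer symbol. -/
noncomputable def pochR (a : ℝ) (n : ℕ) : ℝ := ∏ i ∈ Finset.range n, (a + i)

/-- `z(x) = ₂F₁(1/2,1/2;1;x)`. -/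
noncomputable def zfun (x : ℝ) : ℝ :=
  ∑' k : ℕ, pochR (1/2) k ^ 2 / (k.factorial : ℝ) ^ 2 * x ^ k

/-- Complete elliptic integral of the first kind `K(x) = (π/2)·₂F₁(1/2,1/2;1;x)`. -/
noncomputable def Kfun (x : ℝ) : ℝ := Real.pi / 2 * zfun x

/-- `y(x) = π K'(x)/K(x)` where `K'(x) = K(1-x)`. -/
noncomputable def yfun (x : ℝ) : ℝ := Real.pi * Kfun (1 - x) / Kfun x

open Filter Topology Real



/-- coefficient sequence -/
noncomputable def aseq (k : ℕ) : ℝ := pochR (1/2) k ^ 2 / (k.factorial : ℝ) ^ 2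

lemma aseq_zero : aseq 0 = 1 := by simp [aseq, pochR]

lemma aseq_succ (k : ℕ) : aseq (k + 1) = aseq k * ((2 * k + 1) / (2 * k + 2)) ^ 2 := by
  have h1 : pochR (1/2) (k+1) = pochR (1/2) k * (1/2 + k) := by
    simp [pochR, Finset.prod_range_succ]
  have h2 : ((k+1).factorial : ℝ) = (k.factorial : ℝ) * (k + 1) := by
    push_cast [Nat.factorial_succ]; ring
  have hk : (k.factorial : ℝ) ≠ 0 := Nat.cast_ne_zero.mpr k.factorial_ne_zero
  have hk1 : (k : ℝ) + 1 ≠ 0 := by positivity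
  unfold aseq; rw [h1, h2]
  field_simp
  ring

lemma aseq_pos (k : ℕ) : 0 < aseq k := by
  induction k with
  | zero => rw [aseq_zero]; norm_num
  | succ n ih => rw [aseq_succ]; positivity

lemma aseq_le_one (k : ℕ) : aseq k ≤ 1 := by
  induction k with
  | zero => rw [aseq_zero]
  | succ n ih =>
    rw [aseq_succ]
    have h1 : ((2 * (n:ℝ) + 1) / (2 * n + 2)) ^ 2 ≤ 1 := by
      have : (2 * (n:ℝ) + 1) / (2 * n + 2) ≤ 1 := by
        rw [div_le_one (by positivity)]; linarith
      have h0 : 0 ≤ (2 * (n:ℝ) + 1) / (2 * n + 2) := by positivity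
      nlinarith
    nlinarith [aseq_pos n]

/-- `(2k+1)·aseq k` equals the reciprocal of the Wallis partial product. -/
lemma wallis_prod_aseq (k : ℕ) :
    (∏ i ∈ Finset.range k, ((2 * (i:ℝ) + 2) / (2 * i + 1) * ((2 * i + 2) / (2 * i + 3)))) *
      ((2 * k + 1) * aseq k) = 1 := by
  induction k with
  | zero => simp [aseq_zero]
  | succ n ih =>
    rw [Finset.prod_range_succ, aseq_succ]
    have h1 : (2 * (n:ℝ) + 1) ≠ 0 := by positivity
    have h2 : (2 * (n:ℝ) + 2) ≠ 0 := by positivity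
    have h3 : (2 * (n:ℝ) + 3) ≠ 0 := by positivity
    have key : (2*(n:ℝ)+2)/(2*n+1)*((2*n+2)/(2*n+3)) *
        ((2*((n:ℝ)+1) + 1) * (aseq n * ((2*(n:ℝ)+1)/(2*(n:ℝ)+2))^2)) = (2*n+1) * aseq n := by
      field_simp
      ring
    push_cast
    calc (∏ i ∈ Finset.range n, ((2 * (i:ℝ) + 2) / (2 * i + 1) * ((2 * i + 2) / (2 * i + 3)))) *
          ((2*(n:ℝ)+2)/(2*n+1)*((2*n+2)/(2*n+3))) *
          ((2 * ((n:ℝ)+1) + 1) * (aseq n * ((2*(n:ℝ)+1)/(2*(n:ℝ)+2))^2))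
        = (∏ i ∈ Finset.range n, ((2 * (i:ℝ) + 2) / (2 * i + 1) * ((2 * i + 2) / (2 * i + 3)))) *
          ((2*(n:ℝ)+2)/(2*n+1)*((2*n+2)/(2*n+3)) *
          ((2*((n:ℝ)+1) + 1) * (aseq n * ((2*(n:ℝ)+1)/(2*(n:ℝ)+2))^2))) := by ring
      _ = (∏ i ∈ Finset.range n, ((2 * (i:ℝ) + 2) / (2 * i + 1) * ((2 * i + 2) / (2 * i + 3)))) *
          ((2*n+1) * aseq n) := by rw [key]
      _ = 1 := ih

lemma tendsto_two_k_one_aseq :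
    Tendsto (fun k : ℕ => (2 * (k:ℝ) + 1) * aseq k) atTop (𝓝 (2 / π)) := by
  have hW := Real.tendsto_prod_pi_div_two
  have hpi : (π : ℝ) / 2 ≠ 0 := by positivity
  have h := hW.inv₀ hpi
  have heq : (fun k : ℕ => (∏ i ∈ Finset.range k,
      ((2 * (i:ℝ) + 2) / (2 * i + 1) * ((2 * i + 2) / (2 * i + 3))))⁻¹) =
      fun k : ℕ => (2 * (k:ℝ) + 1) * aseq k := by
    funext k
    exact inv_eq_of_mul_eq_one_right (wallis_prod_aseq k)
  rw [heq] at h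
  convert h using 2
  rw [inv_div]

lemma tendsto_k_aseq : Tendsto (fun k : ℕ => (k:ℝ) * aseq k) atTop (𝓝 (1 / π)) := by
  have hhalf : Tendsto (fun k : ℕ => (k:ℝ) / (2 * k + 1)) atTop (𝓝 (1/2)) := by
    have h0 : Tendsto (fun k : ℕ => (2 : ℝ) + 1 / k) atTop (𝓝 2) := by
      simpa using (tendsto_const_nhds : Tendsto (fun _ : ℕ => (2:ℝ)) atTop (𝓝 2)).add tendsto_one_div_atTop_nhds_zero_nat
    have h2 : Tendsto (fun k : ℕ => ((2 : ℝ) + 1 / k)⁻¹) atTop (𝓝 (2 : ℝ)⁻¹) :=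
      h0.inv₀ two_ne_zero
    refine Tendsto.congr' ?_ (by simpa [one_div] using h2)
    filter_upwards [eventually_ge_atTop 1] with k hk
    have hk' : (k : ℝ) ≠ 0 := Nat.cast_ne_zero.mpr (by omega)
    have hk2 : (2 * (k:ℝ) + 1) ≠ 0 := by positivity
    field_simp
  have h1 : Tendsto (fun k : ℕ => ((k:ℝ) / (2 * k + 1)) * ((2 * (k:ℝ) + 1) * aseq k))
      atTop (𝓝 ((1/2) * (2 / π))) := hhalf.mul tendsto_two_k_one_aseq
  have heq : (fun k : ℕ => ((k:ℝ) / (2 * k + 1)) * ((2 * (k:ℝ) + 1) * aseq k))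
      =ᶠ[atTop] fun k : ℕ => (k:ℝ) * aseq k := by
    filter_upwards with k
    have hk2 : (2 * (k:ℝ) + 1) ≠ 0 := by positivity
    field_simp
  have := h1.congr' heq
  convert this using 2
  ring

/-- monotone: `(k+1)·a_{k+1} ≥ k·a_k` -/
lemma k_aseq_mono (k : ℕ) : (k:ℝ) * aseq k ≤ ((k:ℝ)+1) * aseq (k+1) := by
  rw [aseq_succ]
  have h2 : (0:ℝ) < 2 * k + 2 := by positivity
  rw [div_pow, ← sub_nonneg]
  have : ((k:ℝ)+1) * (aseq k * ((2 * k + 1)^2 / (2 * k + 2)^2)) - (k:ℝ) * aseq k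
      = aseq k * (((k:ℝ)+1) * (2 * k + 1)^2 - k * (2*k+2)^2) / (2 * k + 2)^2 := by
    field_simp
  rw [this]
  have hnum : (0:ℝ) ≤ ((k:ℝ)+1) * (2 * k + 1)^2 - k * (2*k+2)^2 := by nlinarith [k.cast_nonneg (α := ℝ)]
  exact div_nonneg (mul_nonneg (aseq_pos k).le hnum) (by positivity)

lemma k_aseq_le (k : ℕ) : (k:ℝ) * aseq k ≤ 1 / π := by
  have hmono : Monotone (fun k : ℕ => (k:ℝ) * aseq k) := monotone_nat_of_le_succ fun n => by
    simpa using k_aseq_mono n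
  exact hmono.ge_of_tendsto tendsto_k_aseq k

lemma summable_pow_geom (m : ℕ) {q : ℝ} (hq0 : 0 ≤ q) (hq : q < 1) :
    Summable fun k : ℕ => ((k:ℝ)+1)^m * q^k := by
  rcases eq_or_lt_of_le hq0 with rfl | hq0'
  · apply summable_of_ne_finset_zero (s := {0})
    intro k hk
    have : k ≠ 0 := by simpa using hk
    simp [zero_pow this]
  · apply summable_of_ratio_test_tendsto_lt_one hq
    · filter_upwards with k
      positivity
    · have h1 : Tendsto (fun k : ℕ => (((k:ℝ)+2)/((k:ℝ)+1))^m * q) atTop (𝓝 (1^m * q)) := by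
        apply Tendsto.mul _ tendsto_const_nhds
        apply Tendsto.pow
        have h2 : Tendsto (fun k : ℕ => 1 + 1/((k:ℝ)+1)) atTop (𝓝 (1+0)) := by
          apply tendsto_const_nhds.add
          apply Tendsto.div_atTop tendsto_const_nhds
          exact tendsto_natCast_atTop_atTop.atTop_add tendsto_const_nhds
        refine Tendsto.congr (fun k => ?_) (by simpa using h2)
        have : ((k:ℝ)+1) ≠ 0 := by positivity
        field_simp
        ring
      simp only [one_pow, one_mul] at h1
      refine Tendsto.congr' ?_ h1
      filter_upwards with k
      have h3 : ((k:ℝ)+1) ≠ 0 := by positivity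
      have h4 : ((k:ℝ)+1)^m ≠ 0 := by positivity
      have h5 : (0:ℝ) < q^k := by positivity
      rw [Real.norm_eq_abs, Real.norm_eq_abs, abs_of_nonneg (by positivity),
        abs_of_nonneg (by positivity)]
      push_cast
      rw [pow_succ q]
      rw [div_pow]
      field_simp
      ring
lemma summable_coeff (m : ℕ) {x : ℝ} (hx : |x| < 1) {c : ℕ → ℝ} {C : ℝ}
    (hc : ∀ k, |c k| ≤ C * ((k:ℝ)+1)^m) : Summable fun k => c k * x^k := by
  refine Summable.of_norm_bounded (g := fun k => C * (((k:ℝ)+1)^m * |x|^k))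
    ((summable_pow_geom m (abs_nonneg x) hx).mul_left C) fun k => ?_
  rw [norm_mul, Real.norm_eq_abs, Real.norm_eq_abs, abs_pow]
  calc |c k| * |x|^k ≤ (C * ((k:ℝ)+1)^m) * |x|^k := by
        apply mul_le_mul_of_nonneg_right (hc k) (by positivity)
    _ = C * (((k:ℝ)+1)^m * |x|^k) := by ring

lemma hasDerivAt_powser {m : ℕ} {C : ℝ} {b : ℕ → ℝ} (hb : ∀ k, |b k| ≤ C * ((k:ℝ)+1)^m)
    {x : ℝ} (hx : |x| < 1) :
    HasDerivAt (fun y : ℝ => ∑' k : ℕ, b k * y^k) (∑' k : ℕ, ((k:ℝ)+1) * b (k+1) * x^k) x := by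
  have hC : 0 ≤ C := le_trans (by positivity : (0:ℝ) ≤ |b 0| / 1) (by simpa using hb 0)
  set r : ℝ := (|x|+1)/2 with hr_def
  have hr1 : r < 1 := by simp only [hr_def]; linarith
  have hxr : |x| < r := by simp only [hr_def]; linarith [abs_nonneg x]
  have hr0 : 0 < r := lt_of_le_of_lt (abs_nonneg x) hxr
  have hrabs : |r| < 1 := by rwa [abs_of_pos hr0]
  have hu : Summable fun k : ℕ => C * ((k:ℝ)+1)^(m+1) * r^(k-1) := by
    rw [← summable_nat_add_iff 1]
    simp only [Nat.add_sub_cancel]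
    have h6 : Summable fun k : ℕ => (C * (((k:ℕ):ℝ)+1+1)^(m+1)) * r^k := by
      apply summable_coeff (m+1) hrabs (C := C * 2^(m+1))
      intro k
      rw [abs_of_nonneg (by positivity), mul_assoc]
      apply mul_le_mul_of_nonneg_left _ hC
      calc ((k:ℝ)+1+1)^(m+1) ≤ (2*((k:ℝ)+1))^(m+1) := by
            apply pow_le_pow_left₀ (by positivity)
            nlinarith [Nat.cast_nonneg (α := ℝ) k]
        _ = 2^(m+1) * ((k:ℝ)+1)^(m+1) := by rw [mul_pow]
    refine h6.congr fun k => ?_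
    push_cast
    ring
  have hbound : ∀ (k : ℕ), ∀ y ∈ Set.Ioo (-r) r,
      ‖b k * ((k:ℝ) * y^(k-1))‖ ≤ C * ((k:ℝ)+1)^(m+1) * r^(k-1) := by
    intro k y hy
    have hy' : |y| ≤ r := le_of_lt (abs_lt.mpr ⟨hy.1, hy.2⟩)
    rw [Real.norm_eq_abs, abs_mul, abs_mul, Nat.abs_cast, abs_pow]
    calc |b k| * ((k:ℝ) * |y|^(k-1)) ≤ (C * ((k:ℝ)+1)^m) * (((k:ℝ)+1) * r^(k-1)) := by
          apply mul_le_mul (hb k) _ (by positivity) (by positivity)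
          apply mul_le_mul (by linarith [Nat.cast_nonneg (α := ℝ) k]) _ (by positivity)
            (by linarith [Nat.cast_nonneg (α := ℝ) k])
          exact pow_le_pow_left₀ (abs_nonneg y) hy' _
      _ = C * ((k:ℝ)+1)^(m+1) * r^(k-1) := by rw [pow_succ]; ring
  have hxmem : x ∈ Set.Ioo (-r) r := Set.mem_Ioo.mpr (abs_lt.mp hxr)
  have key := hasDerivAt_tsum_of_isPreconnected hu (isOpen_Ioo (a := -r) (b := r))
    isPreconnected_Ioo
    (g := fun k y => b k * y^k) (g' := fun k y => b k * ((k:ℝ) * y^(k-1)))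
    (fun k y _ => (hasDerivAt_pow k y).const_mul (b k))
    hbound hxmem (summable_coeff m hx hb) hxmem
  have hg'sum : Summable fun k : ℕ => b k * ((k:ℝ) * x^(k-1)) :=
    Summable.of_norm_bounded hu (fun k => hbound k x hxmem)
  have hEq : (∑' k : ℕ, b k * ((k:ℝ) * x^(k-1)))
      = ∑' k : ℕ, ((k:ℝ)+1) * b (k+1) * x^k := by
    rw [Summable.tsum_eq_zero_add hg'sum]
    simp only [Nat.cast_zero, zero_mul, mul_zero, zero_add, Nat.add_sub_cancel]
    refine tsum_congr fun k => ?_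
    push_cast
    ring
  exact hEq ▸ key
lemma zfun_eq (x : ℝ) : zfun x = ∑' k : ℕ, aseq k * x^k := rfl

lemma aseq_rec (k : ℕ) : ((k:ℝ)+1)^2 * aseq (k+1) = ((k:ℝ)+1/2)^2 * aseq k := by
  rw [aseq_succ]
  have h2 : (2*(k:ℝ)+2) ≠ 0 := by positivity
  field_simp

noncomputable def zd (x : ℝ) : ℝ := ∑' k : ℕ, ((k:ℝ)+1) * aseq (k+1) * x^k
noncomputable def zdd (x : ℝ) : ℝ := ∑' k : ℕ, ((k:ℝ)+1) * (((k:ℝ)+2) * aseq (k+2)) * x^k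

lemma abs_aseq_le (k : ℕ) : |aseq k| ≤ 1 * ((k:ℝ)+1)^0 := by
  rw [abs_of_pos (aseq_pos k)]; simpa using aseq_le_one k

lemma abs_zd_coeff_le (k : ℕ) : |((k:ℝ)+1) * aseq (k+1)| ≤ 1 * ((k:ℝ)+1)^1 := by
  have hpos := aseq_pos (k+1)
  rw [abs_of_pos (by positivity : (0:ℝ) < ((k:ℝ)+1) * aseq (k+1))]
  have := aseq_le_one (k+1)
  have h0 : (0:ℝ) ≤ (k:ℝ)+1 := by positivity
  nlinarith

lemma hasDerivAt_zfun {x : ℝ} (hx : |x| < 1) : HasDerivAt zfun (zd x) x := by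
  have h := hasDerivAt_powser abs_aseq_le hx
  exact h

lemma hasDerivAt_zd {x : ℝ} (hx : |x| < 1) : HasDerivAt zd (zdd x) x := by
  have h := hasDerivAt_powser abs_zd_coeff_le hx
  have hEq : (∑' k : ℕ, ((k:ℝ)+1) * ((((k+1:ℕ)):ℝ)+1) * aseq (k+1+1) * x^k) = zdd x := by
    refine tsum_congr fun k => ?_
    push_cast
    ring
  unfold zd
  convert h using 1
  rw [← hEq]
  refine tsum_congr fun k => ?_
  push_cast
  ring

lemma ode_zfun {x : ℝ} (hx : |x| < 1) :
    x * (1 - x) * zdd x + (1 - 2*x) * zd x - zfun x / 4 = 0 := by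
  have hs2 : Summable fun k : ℕ => ((k:ℝ)+1) * (((k:ℝ)+2) * aseq (k+2)) * x^k := by
    apply summable_coeff 2 hx (C := 2)
    intro k
    have h1 := aseq_le_one (k+2)
    have h2 := (aseq_pos (k+2)).le
    rw [abs_of_nonneg (by positivity)]
    have h0 : (0:ℝ) ≤ (k:ℝ) := k.cast_nonneg
    nlinarith
  have hsA : Summable fun k : ℕ => (k:ℝ) * (((k:ℝ)+1) * aseq (k+1)) * x^k := by
    apply summable_coeff 2 hx (C := 1)
    intro k
    have h1 := aseq_le_one (k+1)
    have h2 := (aseq_pos (k+1)).le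
    rw [abs_of_nonneg (by positivity)]
    have h0 : (0:ℝ) ≤ (k:ℝ) := k.cast_nonneg
    nlinarith
  have hsB : Summable fun k : ℕ => ((k:ℝ)-1) * (k:ℝ) * aseq k * x^k := by
    apply summable_coeff 2 hx (C := 1)
    intro k
    have h1 := aseq_le_one k
    have h2 := (aseq_pos k).le
    have h0 : (0:ℝ) ≤ (k:ℝ) := k.cast_nonneg
    calc |((k:ℝ)-1) * (k:ℝ) * aseq k| = |(k:ℝ)-1| * ((k:ℝ) * aseq k) := by
          rw [abs_mul, abs_mul, Nat.abs_cast, abs_of_nonneg h2, mul_assoc]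
      _ ≤ ((k:ℝ)+1) * (((k:ℝ)+1) * 1) := by
          apply mul_le_mul (abs_le.mpr ⟨by linarith, by linarith⟩)
            (mul_le_mul (by linarith) h1 h2 (by positivity)) (by positivity) (by positivity)
      _ = 1 * ((k:ℝ)+1)^2 := by ring
  have hsC : Summable fun k : ℕ => ((k:ℝ)+1) * aseq (k+1) * x^k :=
    summable_coeff 1 hx abs_zd_coeff_le
  have hsD : Summable fun k : ℕ => (k:ℝ) * aseq k * x^k := by
    apply summable_coeff 1 hx (C := 1)
    intro k
    have h1 := aseq_le_one k
    have h2 := (aseq_pos k).le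
    have h0 : (0:ℝ) ≤ (k:ℝ) := k.cast_nonneg
    rw [abs_of_nonneg (by positivity)]
    nlinarith
  have hsE : Summable fun k : ℕ => aseq k * x^k := summable_coeff 0 hx abs_aseq_le
  have tsum_shift : ∀ {g : ℕ → ℝ}, Summable g → g 0 = 0 → ∑' k, g k = ∑' k, g (k+1) := by
    intro g hg h0
    rw [Summable.tsum_eq_zero_add hg, h0, zero_add]
  -- T1 : x * zdd x
  have T1 : x * zdd x = ∑' k : ℕ, (k:ℝ) * (((k:ℝ)+1) * aseq (k+1)) * x^k := by
    have h0 : (fun k : ℕ => (k:ℝ) * (((k:ℝ)+1) * aseq (k+1)) * x^k) 0 = 0 := by simp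
    rw [tsum_shift hsA h0, zdd, ← tsum_mul_left]
    refine tsum_congr fun k => ?_
    push_cast
    ring
  have tsum_shift2 : ∀ {g : ℕ → ℝ}, Summable g → g 0 = 0 → g 1 = 0 →
      ∑' k, g k = ∑' k, g (k+2) := by
    intro g hg h0 h1
    rw [Summable.tsum_eq_zero_add hg, h0, zero_add,
      Summable.tsum_eq_zero_add ((summable_nat_add_iff 1).mpr hg)]
    show g 1 + _ = _
    rw [h1, zero_add]
  -- T2 : x^2 * zdd x
  have T2 : x^2 * zdd x = ∑' k : ℕ, ((k:ℝ)-1) * (k:ℝ) * aseq k * x^k := by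
    have h0 : (fun k : ℕ => ((k:ℝ)-1) * (k:ℝ) * aseq k * x^k) 0 = 0 := by simp
    have h1 : (fun k : ℕ => ((k:ℝ)-1) * (k:ℝ) * aseq k * x^k) 1 = 0 := by simp
    rw [tsum_shift2 hsB h0 h1, zdd, ← tsum_mul_left]
    refine tsum_congr fun k => ?_
    push_cast
    ring
  -- T3 : x * zd x
  have T3 : x * zd x = ∑' k : ℕ, (k:ℝ) * aseq k * x^k := by
    have h0 : (fun k : ℕ => (k:ℝ) * aseq k * x^k) 0 = 0 := by simp
    rw [tsum_shift hsD h0, zd, ← tsum_mul_left]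
    refine tsum_congr fun k => ?_
    push_cast
    ring
  have expand : x * (1 - x) * zdd x + (1 - 2*x) * zd x - zfun x / 4
      = (x * zdd x) - (x^2 * zdd x) + (zd x - 2 * (x * zd x)) - zfun x / 4 := by ring
  have key : ∀ k : ℕ, ((k:ℝ) * (((k:ℝ)+1) * aseq (k+1)) * x^k - ((k:ℝ)-1) * (k:ℝ) * aseq k * x^k
      + (((k:ℝ)+1) * aseq (k+1) * x^k - 2 * ((k:ℝ) * aseq k * x^k)) - aseq k * x^k / 4) = 0 := by
    intro k
    have hrec : ((k:ℝ)+1)^2 * aseq (k+1) - ((k:ℝ)+1/2)^2 * aseq k = 0 := by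
      rw [aseq_rec k]; ring
    linear_combination (x^k) * hrec
  rw [expand, T1, T2, T3, zfun_eq, zd]
  have h2D : 2 * ∑' k : ℕ, (k:ℝ) * aseq k * x^k = ∑' k : ℕ, 2 * ((k:ℝ) * aseq k * x^k) :=
    tsum_mul_left.symm
  have hE4 : (∑' k : ℕ, aseq k * x^k) / 4 = ∑' k : ℕ, aseq k * x^k / 4 := tsum_div_const.symm
  rw [h2D, hE4, ← Summable.tsum_sub hsA hsB, ← Summable.tsum_sub hsC (hsD.mul_left 2),
    ← Summable.tsum_add (hsA.sub hsB) (hsC.sub (hsD.mul_left 2)),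
    ← Summable.tsum_sub ((hsA.sub hsB).add (hsC.sub (hsD.mul_left 2))) (hsE.div_const 4)]
  calc (∑' k : ℕ, ((k:ℝ) * (((k:ℝ)+1) * aseq (k+1)) * x^k - ((k:ℝ)-1) * (k:ℝ) * aseq k * x^k
      + (((k:ℝ)+1) * aseq (k+1) * x^k - 2 * ((k:ℝ) * aseq k * x^k)) - aseq k * x^k / 4))
      = ∑' _k : ℕ, (0:ℝ) := tsum_congr key
    _ = 0 := tsum_zero
noncomputable def Wr (x : ℝ) : ℝ := zfun x * (-zd (1-x)) - zfun (1-x) * zd x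
noncomputable def Ffun (x : ℝ) : ℝ := x * (1-x) * Wr x

lemma abs_lt_one_of_mem {x : ℝ} (hx : x ∈ Set.Ioo (0:ℝ) 1) : |x| < 1 := by
  rw [abs_lt]; constructor <;> [linarith [hx.1]; exact hx.2]

lemma abs_one_sub_lt {x : ℝ} (hx : x ∈ Set.Ioo (0:ℝ) 1) : |1 - x| < 1 := by
  rw [abs_lt]; constructor <;> [linarith [hx.2]; linarith [hx.1]]

lemma hasDerivAt_z2 {x : ℝ} (hx : |1-x| < 1) :
    HasDerivAt (fun t : ℝ => zfun (1-t)) (-zd (1-x)) x := by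
  have h := (hasDerivAt_zfun hx).comp x ((hasDerivAt_id x).const_sub 1)
  exact h.congr_deriv (by simp)

lemma hasDerivAt_z2d {x : ℝ} (hx : |1-x| < 1) :
    HasDerivAt (fun t : ℝ => -zd (1-t)) (zdd (1-x)) x := by
  have h := ((hasDerivAt_zd hx).comp x ((hasDerivAt_id x).const_sub 1)).neg
  exact h.congr_deriv (by simp)

lemma hasDerivAt_Ffun {x : ℝ} (hx : x ∈ Set.Ioo (0:ℝ) 1) : HasDerivAt Ffun 0 x := by
  have h1 : |x| < 1 := abs_lt_one_of_mem hx
  have h2 : |1-x| < 1 := abs_one_sub_lt hx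
  have hW : HasDerivAt Wr
      (zd x * (-zd (1-x)) + zfun x * zdd (1-x) -
        ((-zd (1-x)) * zd x + zfun (1-x) * zdd x)) x :=
    ((hasDerivAt_zfun h1).mul (hasDerivAt_z2d h2)).sub
      ((hasDerivAt_z2 h2).mul (hasDerivAt_zd h1))
  have hid : HasDerivAt (fun t : ℝ => t * (1-t)) (1 * (1-x) + x * (-1)) x :=
    (hasDerivAt_id x).mul ((hasDerivAt_id x).const_sub 1)
  have hF := hid.mul hW
  have ode1 := ode_zfun h1
  have ode2 := ode_zfun h2
  have h1x : (1:ℝ) - (1 - x) = x := by ring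
  rw [h1x] at ode2
  refine HasDerivAt.congr_deriv hF (Eq.symm ?_)
  have hWrx : Wr x = zfun x * (-zd (1-x)) - zfun (1-x) * zd x := rfl
  rw [hWrx]
  linear_combination zfun (1-x) * ode1 - zfun x * ode2

lemma Ffun_const {x t : ℝ} (hx : x ∈ Set.Ioo (0:ℝ) 1) (ht : t ∈ Set.Ioo (0:ℝ) 1) :
    Ffun x = Ffun t := by
  rcases lt_trichotomy x t with h | h | h
  · have hcont : ContinuousOn Ffun (Set.Icc x t) := fun s hs =>
      (hasDerivAt_Ffun ⟨lt_of_lt_of_le hx.1 hs.1, lt_of_le_of_lt hs.2 ht.2⟩).continuousAt.continuousWithinAt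
    obtain ⟨c, _, hc⟩ := exists_hasDerivAt_eq_slope Ffun (fun _ => 0) h hcont
      (fun s hs => hasDerivAt_Ffun ⟨lt_trans hx.1 hs.1, lt_trans hs.2 ht.2⟩)
    have : Ffun t - Ffun x = 0 := by
      rcases div_eq_zero_iff.mp hc.symm with h0 | h0
      · exact h0
      · exact absurd h0 (sub_ne_zero.mpr (ne_of_gt h))
    linarith
  · rw [h]
  · have hcont : ContinuousOn Ffun (Set.Icc t x) := fun s hs =>
      (hasDerivAt_Ffun ⟨lt_of_lt_of_le ht.1 hs.1, lt_of_le_of_lt hs.2 hx.2⟩).continuousAt.continuousWithinAt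
    obtain ⟨c, _, hc⟩ := exists_hasDerivAt_eq_slope Ffun (fun _ => 0) h hcont
      (fun s hs => hasDerivAt_Ffun ⟨lt_trans ht.1 hs.1, lt_trans hs.2 hx.2⟩)
    have : Ffun x - Ffun t = 0 := by
      rcases div_eq_zero_iff.mp hc.symm with h0 | h0
      · exact h0
      · exact absurd h0 (sub_ne_zero.mpr (ne_of_gt h))
    linarith

lemma zd_coeff_le_pi (k : ℕ) : ((k:ℝ)+1) * aseq (k+1) ≤ 1/π := by
  have := k_aseq_le (k+1); push_cast at this; linarith

lemma zd_coeff_mono : Monotone (fun k : ℕ => ((k:ℝ)+1) * aseq (k+1)) := by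
  apply monotone_nat_of_le_succ
  intro n
  have := k_aseq_mono (n+1)
  push_cast at this ⊢
  linarith

lemma zd_coeff_tendsto : Tendsto (fun k : ℕ => ((k:ℝ)+1) * aseq (k+1)) atTop (𝓝 (1/π)) := by
  have h := tendsto_k_aseq.comp (tendsto_add_atTop_nat 1)
  refine h.congr fun k => ?_
  simp only [Function.comp_apply]
  push_cast
  ring

lemma summable_zd_terms {x : ℝ} (hx : |x| < 1) :
    Summable fun k : ℕ => ((k:ℝ)+1) * aseq (k+1) * x^k :=
  summable_coeff 1 hx abs_zd_coeff_le

lemma tendsto_one_sub_mul_zd :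
    Tendsto (fun s : ℝ => (1-s) * zd s) (𝓝[Set.Ioo (0:ℝ) 1] 1) (𝓝 (1/π)) := by
  have hpi : (0:ℝ) < π := Real.pi_pos
  rw [Metric.tendsto_nhdsWithin_nhds]
  intro ε hε
  obtain ⟨N, hN⟩ := (zd_coeff_tendsto.eventually (eventually_gt_nhds
    (show 1/π - ε/2 < 1/π by linarith))).exists
  refine ⟨(π*ε/2)/(N+1), by positivity, ?_⟩
  intro s hs hdist
  have hs0 : 0 < s := hs.1
  have hs1 : s < 1 := hs.2
  have habs : |s| < 1 := by rw [abs_lt]; exact ⟨by linarith, hs1⟩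
  have hds : 1 - s < (π*ε/2)/(N+1) := by
    rw [Real.dist_eq, abs_lt] at hdist
    linarith [hdist.1]
  have hgeo : Summable fun k : ℕ => (1/π) * s^k :=
    (summable_geometric_of_lt_one hs0.le hs1).mul_left _
  -- upper bound
  have hub : (1-s) * zd s ≤ 1/π := by
    have h1 : zd s ≤ (1/π) * (1-s)⁻¹ := by
      have := Summable.tsum_le_tsum (f := fun k : ℕ => ((k:ℝ)+1) * aseq (k+1) * s^k)
        (g := fun k : ℕ => (1/π) * s^k)
        (fun k => mul_le_mul_of_nonneg_right (zd_coeff_le_pi k) (pow_nonneg hs0.le k))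
        (summable_zd_terms habs) hgeo
      rw [tsum_mul_left, tsum_geometric_of_lt_one hs0.le hs1] at this
      exact this
    calc (1-s) * zd s ≤ (1-s) * ((1/π) * (1-s)⁻¹) :=
          mul_le_mul_of_nonneg_left h1 (by linarith)
      _ = 1/π := by
          rw [mul_comm, mul_assoc, inv_mul_cancel₀ (by linarith : (1:ℝ)-s ≠ 0), mul_one]
  -- lower bound
  have hlb : (((N:ℝ)+1) * aseq (N+1)) * s^N ≤ (1-s) * zd s := by
    have hg : Summable fun j : ℕ => (((N:ℝ)+1) * aseq (N+1)) * s^N * s^j :=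
      (summable_geometric_of_lt_one hs0.le hs1).mul_left _
    have h2 : (∑' j : ℕ, (((N:ℝ)+1) * aseq (N+1)) * s^N * s^j) ≤ zd s := by
      apply Summable.tsum_le_tsum_of_inj (fun j => j + N) (add_left_injective N)
      · intro k _
        have := aseq_pos (k+1)
        positivity
      · intro j
        have hmono := zd_coeff_mono (Nat.le_add_left N j)
        have hsp : (0:ℝ) ≤ s^N * s^j := by positivity
        calc (((N:ℝ)+1) * aseq (N+1)) * s^N * s^j
            = (((N:ℝ)+1) * aseq (N+1)) * (s^N * s^j) := by ring
          _ ≤ (((j+N:ℕ):ℝ)+1) * aseq ((j+N)+1) * (s^N * s^j) := by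
              apply mul_le_mul_of_nonneg_right _ hsp
              exact_mod_cast hmono
          _ = (((j+N:ℕ):ℝ)+1) * aseq ((j+N)+1) * s^(j+N) := by
              rw [← pow_add]
              ring_nf
      · exact hg
      · exact summable_zd_terms habs
    rw [tsum_mul_left, tsum_geometric_of_lt_one hs0.le hs1] at h2
    have hinv : (0:ℝ) < 1 - s := by linarith
    calc (((N:ℝ)+1) * aseq (N+1)) * s^N
        = (1-s) * ((((N:ℝ)+1) * aseq (N+1)) * s^N * (1-s)⁻¹) := by field_simp
      _ ≤ (1-s) * zd s := mul_le_mul_of_nonneg_left h2 hinv.le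
  -- Bernoulli
  have hber : 1 - (N:ℝ)*(1-s) ≤ s^N := by
    have := one_add_mul_le_pow (a := s-1) (by linarith) N
    have hb : (1:ℝ) + (N:ℝ)*(s-1) ≤ (1+(s-1))^N := this
    calc 1 - (N:ℝ)*(1-s) = 1 + (N:ℝ)*(s-1) := by ring
      _ ≤ (1+(s-1))^N := hb
      _ = s^N := by ring_nf
  have hbN_le : ((N:ℝ)+1) * aseq (N+1) ≤ 1/π := zd_coeff_le_pi N
  have hbN_pos : 0 < ((N:ℝ)+1) * aseq (N+1) := by
    have := aseq_pos (N+1); positivity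
  have hNs : (N:ℝ)*(1-s) < π*ε/2 := by
    have h3 : (N:ℝ)*(1-s) ≤ ((N:ℝ)+1)*(1-s) := by nlinarith [Nat.cast_nonneg (α := ℝ) N]
    have h4 : ((N:ℝ)+1)*(1-s) < ((N:ℝ)+1) * ((π*ε/2)/(N+1)) :=
      mul_lt_mul_of_pos_left hds (by positivity)
    have h5 : ((N:ℝ)+1) * ((π*ε/2)/(N+1)) = π*ε/2 := by
      rw [mul_comm, div_mul_cancel₀ _ (by positivity : ((N:ℝ)+1) ≠ 0)]
    linarith
  have hlow : 1/π - ε < (1-s) * zd s := by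
    have hsN : (0:ℝ) ≤ s^N := by positivity
    have c1 : (((N:ℝ)+1) * aseq (N+1)) * s^N ≥ (((N:ℝ)+1) * aseq (N+1)) * (1 - (N:ℝ)*(1-s)) :=
      mul_le_mul_of_nonneg_left hber hbN_pos.le
    have c2 : (((N:ℝ)+1) * aseq (N+1)) * (1 - (N:ℝ)*(1-s))
        = (((N:ℝ)+1) * aseq (N+1)) - (((N:ℝ)+1) * aseq (N+1)) * ((N:ℝ)*(1-s)) := by ring
    have c3 : (((N:ℝ)+1) * aseq (N+1)) * ((N:ℝ)*(1-s)) ≤ (1/π) * ((N:ℝ)*(1-s)) := by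
      apply mul_le_mul_of_nonneg_right hbN_le
      have : (0:ℝ) ≤ (N:ℝ) := Nat.cast_nonneg N
      nlinarith
    have c4 : (1/π) * ((N:ℝ)*(1-s)) < (1/π) * (π*ε/2) := by
      apply mul_lt_mul_of_pos_left hNs (by positivity)
    have c5 : (1/π) * (π*ε/2) = ε/2 := by field_simp
    nlinarith [hlb]
  rw [Real.dist_eq, abs_lt]
  constructor <;> linarith

lemma zfun_zero : zfun 0 = 1 := by
  rw [zfun_eq]
  rw [tsum_eq_single 0 (fun k hk => by simp [zero_pow hk])]
  simp [aseq_zero]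

lemma zfun_ge_one {x : ℝ} (h0 : 0 ≤ x) (h1 : x < 1) : 1 ≤ zfun x := by
  have habs : |x| < 1 := by rw [abs_lt]; exact ⟨by linarith, h1⟩
  have hsum : Summable fun k : ℕ => aseq k * x^k := summable_coeff 0 habs abs_aseq_le
  have h := Summable.le_tsum hsum 0 (fun i _ => by have := (aseq_pos i).le; positivity)
  rw [zfun_eq]
  simpa [aseq_zero] using h

lemma zfun_le_log {s : ℝ} (h0 : 0 ≤ s) (h1 : s < 1) :
    zfun s ≤ 1 + (1/π) * (-Real.log (1-s)) := by
  have habs : |s| < 1 := by rw [abs_lt]; exact ⟨by linarith, h1⟩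
  have hsum : Summable fun k : ℕ => aseq k * s^k := summable_coeff 0 habs abs_aseq_le
  have hlog : HasSum (fun k : ℕ => s^(k+1)/((k:ℝ)+1)) (-Real.log (1-s)) := by
    have := Real.hasSum_pow_div_log_of_abs_lt_one habs
    refine this.congr_fun fun k => ?_
    push_cast
    ring
  have hlog' : HasSum (fun k : ℕ => (1/π) * (s^(k+1)/((k:ℝ)+1))) ((1/π) * (-Real.log (1-s))) :=
    hlog.mul_left _
  have hshift : Summable fun k : ℕ => aseq (k+1) * s * s^k := by
    apply summable_coeff 0 habs (C := 1)
    intro k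
    have ha := aseq_pos (k+1)
    have hb := aseq_le_one (k+1)
    rw [abs_of_nonneg (by positivity), pow_zero]
    nlinarith
  have hshift' : Summable fun k : ℕ => aseq (k+1) * s^(k+1) := by
    refine hshift.congr fun k => ?_
    rw [pow_succ]
    ring
  have hterm : ∀ k : ℕ, aseq (k+1) * s^(k+1) ≤ (1/π) * (s^(k+1)/((k:ℝ)+1)) := by
    intro k
    have hk := zd_coeff_le_pi k
    have hkpos : (0:ℝ) < (k:ℝ)+1 := by positivity
    have ha : aseq (k+1) ≤ (1/π) / ((k:ℝ)+1) := by
      rw [le_div_iff₀ hkpos]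
      linarith [hk]
    have hsp : (0:ℝ) ≤ s^(k+1) := by positivity
    calc aseq (k+1) * s^(k+1) ≤ ((1/π) / ((k:ℝ)+1)) * s^(k+1) :=
          mul_le_mul_of_nonneg_right ha hsp
      _ = (1/π) * (s^(k+1)/((k:ℝ)+1)) := by ring
  rw [zfun_eq, Summable.tsum_eq_zero_add hsum]
  simp only [aseq_zero, pow_zero, mul_one]
  have h2 : (∑' k : ℕ, aseq (k+1) * s^(k+1)) ≤ (1/π) * (-Real.log (1-s)) := by
    rw [← hlog'.tsum_eq]
    exact Summable.tsum_le_tsum hterm hshift' hlog'.summable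
  have h3 : (∑' k : ℕ, aseq (k+1) * s^(k+1)) = ∑' k : ℕ, aseq (k+1) * s^(k+1) := rfl
  linarith [h2, le_of_eq h3]

lemma neBot_l : (𝓝[Set.Ioo (0:ℝ) 1] (0:ℝ)).NeBot := by
  apply mem_closure_iff_nhdsWithin_neBot.mp
  rw [closure_Ioo (by norm_num : (0:ℝ) ≠ 1)]
  exact ⟨le_refl 0, by norm_num⟩

lemma Ffun_tendsto : Tendsto Ffun (𝓝[Set.Ioo (0:ℝ) 1] (0:ℝ)) (𝓝 (-(1/π))) := by
  set l := 𝓝[Set.Ioo (0:ℝ) 1] (0:ℝ) with hl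
  have ht : Tendsto (fun t : ℝ => t) l (𝓝 0) :=
    (tendsto_id : Tendsto id l l).mono_right nhdsWithin_le_nhds
  have h01 : |(0:ℝ)| < 1 := by norm_num
  have hle : l ≤ 𝓝 (0:ℝ) := nhdsWithin_le_nhds
  have hzf : Tendsto zfun l (𝓝 1) := by
    have h3 : Tendsto zfun l (𝓝 (zfun 0)) :=
      (hasDerivAt_zfun h01).continuousAt.tendsto.mono_left hle
    rwa [zfun_zero] at h3
  have hzd0 : Tendsto zd l (𝓝 (zd 0)) :=
    (hasDerivAt_zd h01).continuousAt.tendsto.mono_left hle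
  have hsub : Tendsto (fun t : ℝ => 1 - t) l (𝓝 1) := by
    have h4 : Tendsto (fun t : ℝ => (1:ℝ) - t) l (𝓝 (1 - 0)) :=
      Tendsto.sub tendsto_const_nhds ht
    simpa using h4
  have hmap : Tendsto (fun t : ℝ => 1 - t) l (𝓝[Set.Ioo (0:ℝ) 1] 1) := by
    apply tendsto_nhdsWithin_of_tendsto_nhds_of_eventually_within _ hsub
    filter_upwards [self_mem_nhdsWithin] with t htm
    exact ⟨by linarith [htm.2], by linarith [htm.1]⟩
  have hA : Tendsto (fun t : ℝ => t * zd (1-t)) l (𝓝 (1/π)) := by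
    have := tendsto_one_sub_mul_zd.comp hmap
    refine this.congr fun t => ?_
    simp only [Function.comp_apply]
    rw [show (1:ℝ)-(1-t) = t from by ring]
  have hB : Tendsto (fun t : ℝ => t * zfun (1-t)) l (𝓝 0) := by
    have hupper : Tendsto (fun t : ℝ => t + (1/π) * (-(t * Real.log t))) l (𝓝 0) := by
      have hml : Tendsto (fun t : ℝ => t * Real.log t) l (𝓝 0) := by
        have h := Real.continuous_mul_log.tendsto 0
        simp only [zero_mul] at h
        exact h.mono_left hle
      have := ht.add ((hml.neg).const_mul (1/π))
      simpa using this
    apply tendsto_of_tendsto_of_tendsto_of_le_of_le' tendsto_const_nhds hupper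
    · filter_upwards [self_mem_nhdsWithin] with t htm
      have h1 : (1:ℝ) ≤ zfun (1-t) := zfun_ge_one (by linarith [htm.2]) (by linarith [htm.1])
      nlinarith [htm.1]
    · filter_upwards [self_mem_nhdsWithin] with t htm
      have h1 : zfun (1-t) ≤ 1 + (1/π) * (-Real.log (1-(1-t))) :=
        zfun_le_log (by linarith [htm.2]) (by linarith [htm.1])
      rw [show (1:ℝ)-(1-t) = t from by ring] at h1
      have := mul_le_mul_of_nonneg_left h1 (le_of_lt htm.1)
      calc t * zfun (1-t) ≤ t * (1 + (1/π) * (-Real.log t)) := this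
        _ = t + (1/π) * (-(t * Real.log t)) := by ring
  have hfinal : Tendsto (fun t : ℝ => -((t * zd (1-t)) * ((1-t) * zfun t))
      - (t * zfun (1-t)) * ((1-t) * zd t)) l (𝓝 (-(1/π))) := by
    have h1 := ((hA.mul (hsub.mul hzf)).neg).sub (hB.mul (hsub.mul hzd0))
    have : -(1/π * (1*1)) - 0 * (1 * zd 0) = -(1/π) := by ring
    rwa [this] at h1
  refine hfinal.congr fun t => ?_
  show _ = Ffun t
  unfold Ffun Wr
  ring

lemma Ffun_eq {x : ℝ} (hx : x ∈ Set.Ioo (0:ℝ) 1) : Ffun x = -(1/π) := by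
  haveI := neBot_l
  have h1 : Tendsto Ffun (𝓝[Set.Ioo (0:ℝ) 1] (0:ℝ)) (𝓝 (Ffun x)) := by
    apply Tendsto.congr' _ (tendsto_const_nhds (α := ℝ) (f := 𝓝[Set.Ioo (0:ℝ) 1] (0:ℝ)))
    filter_upwards [self_mem_nhdsWithin] with t htm
    exact Ffun_const hx htm
  exact tendsto_nhds_unique h1 Ffun_tendsto

lemma yfun_eq : yfun = fun x : ℝ => π * zfun (1-x) / zfun x := by
  funext t
  unfold yfun Kfun
  rw [show π * (π/2 * zfun (1-t)) = (π/2) * (π * zfun (1-t)) from by ring,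
    mul_div_mul_left _ _ (by positivity : (π:ℝ)/2 ≠ 0)]

lemma zfun_pos {x : ℝ} (h0 : 0 ≤ x) (h1 : x < 1) : 0 < zfun x :=
  lt_of_lt_of_le one_pos (zfun_ge_one h0 h1)

lemma yfun_pos {x : ℝ} (hx : x ∈ Set.Ioo (0:ℝ) 1) : 0 < yfun x := by
  rw [yfun_eq]
  have h1 : 0 < zfun x := zfun_pos hx.1.le hx.2
  have h2 : 0 < zfun (1-x) := zfun_pos (by linarith [hx.2]) (by linarith [hx.1])
  have := Real.pi_pos
  positivity

lemma hasDerivAt_yfun {x : ℝ} (hx : x ∈ Set.Ioo (0:ℝ) 1) :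
    HasDerivAt yfun (-(1 / (x * (1 - x) * zfun x ^ 2))) x := by
  have h1 : |x| < 1 := abs_lt_one_of_mem hx
  have h2 : |1-x| < 1 := abs_one_sub_lt hx
  have hz1 : (0:ℝ) < zfun x := zfun_pos hx.1.le hx.2
  have hd : HasDerivAt (fun t : ℝ => π * zfun (1-t) / zfun t)
      ((π * (-zd (1-x)) * zfun x - π * zfun (1-x) * zd x) / zfun x ^ 2) x :=
    (((hasDerivAt_z2 h2).const_mul π).div (hasDerivAt_zfun h1) (ne_of_gt hz1))
  rw [yfun_eq]
  convert hd using 1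
  have hF := Ffun_eq hx
  unfold Ffun Wr at hF
  have hx0 : x ≠ 0 := ne_of_gt hx.1
  have hx1 : (1:ℝ) - x ≠ 0 := by linarith [hx.2]
  have hpi : (π:ℝ) ≠ 0 := ne_of_gt Real.pi_pos
  have hxx : x * (1-x) ≠ 0 := mul_ne_zero hx0 hx1
  have hW : zfun x * (-zd (1-x)) - zfun (1-x) * zd x = -(1/π) / (x*(1-x)) := by
    rw [eq_div_iff hxx]
    linear_combination hF
  rw [show π * (-zd (1-x)) * zfun x - π * zfun (1-x) * zd x
    = π * (zfun x * (-zd (1-x)) - zfun (1-x) * zd x) from by ring, hW]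
  field_simp

-- auxiliary estimates for the sinh series
lemma sinh_lower {y0 u : ℝ} (hy0 : 0 < y0) (hu : y0 ≤ u) :
    Real.exp u * (1 - Real.exp (-2*y0)) / 2 ≤ Real.sinh u := by
  rw [Real.sinh_eq]
  have h1 : Real.exp (-u) ≤ Real.exp u * Real.exp (-2*y0) := by
    rw [← Real.exp_add]
    apply Real.exp_le_exp.mpr
    linarith
  nlinarith [Real.exp_pos u]

lemma cosh_le_exp' {u : ℝ} (hu : 0 ≤ u) : Real.cosh u ≤ Real.exp u := by
  rw [Real.cosh_eq]
  have h1 : Real.exp (-u) ≤ Real.exp u := Real.exp_le_exp.mpr (by linarith)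
  linarith

lemma bound_cosh_div_sinh_sq {y0 u : ℝ} (hy0 : 0 < y0) (hu : y0 ≤ u) :
    Real.cosh u / Real.sinh u ^ 2 ≤ 4 / (1 - Real.exp (-2*y0))^2 * Real.exp (-u) := by
  set q := Real.exp (-2*y0) with hq
  have hq1 : q < 1 := by
    rw [hq, ← Real.exp_zero]
    apply Real.exp_lt_exp.mpr
    linarith
  have hq0 : 0 < q := Real.exp_pos _
  have hs_pos : 0 < Real.sinh u := by
    rw [Real.sinh_pos_iff]
    linarith
  have hlow := sinh_lower hy0 hu
  have hlow0 : 0 < Real.exp u * (1 - q) / 2 := by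
    have := Real.exp_pos u
    nlinarith
  have hsq : (Real.exp u * (1 - q) / 2)^2 ≤ Real.sinh u ^ 2 := by
    apply pow_le_pow_left₀ hlow0.le hlow
  have hcosh : Real.cosh u ≤ Real.exp u := cosh_le_exp' (by linarith)
  calc Real.cosh u / Real.sinh u ^ 2 ≤ Real.exp u / (Real.exp u * (1 - q) / 2)^2 := by
        apply div_le_div₀ (Real.exp_pos u).le hcosh (by positivity) hsq
    _ = 4 / (1 - q)^2 * Real.exp (-u) := by
        have h1q : (1:ℝ) - q ≠ 0 := by linarith
        rw [Real.exp_neg]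
        field_simp [h1q, (Real.exp_pos u).ne']
        ring

lemma sinh_series_deriv {y : ℝ} (hy : 0 < y) (p : ℕ) (hp : 1 ≤ p) :
    HasDerivAt (fun z : ℝ => ∑' n : ℕ, ((n:ℝ) + 1) ^ (2 * p - 1) / Real.sinh (((n:ℝ) + 1) * z))
      (∑' n : ℕ, -(((n:ℝ) + 1) ^ (2 * p) * Real.cosh (((n:ℝ) + 1) * y) /
        Real.sinh (((n:ℝ) + 1) * y) ^ 2)) y := by
  set y0 : ℝ := y/2 with hy0_def
  have hy0 : 0 < y0 := by positivity
  have hyy : y ∈ Set.Ioi y0 := by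
    simp only [Set.mem_Ioi, hy0_def]
    linarith
  set q : ℝ := Real.exp (-2*y0) with hq_def
  have hq1 : q < 1 := by
    rw [hq_def, ← Real.exp_zero]
    exact Real.exp_lt_exp.mpr (by linarith)
  have hq0 : 0 < q := Real.exp_pos _
  set C : ℝ := 4 / (1 - q)^2 with hC_def
  have hC : 0 < C := by
    rw [hC_def]
    have : (0:ℝ) < 1 - q := by linarith
    positivity
  have hr1 : Real.exp (-y0) < 1 := by
    rw [← Real.exp_zero]
    exact Real.exp_lt_exp.mpr (by linarith)
  have hr0 : 0 < Real.exp (-y0) := Real.exp_pos _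
  -- summable bound
  have hu : Summable fun n : ℕ => C * (((n:ℝ)+1)^(2*p) * Real.exp (-y0) ^ (n+1)) := by
    have hbase : Summable fun n : ℕ => ((n:ℝ))^(2*p) * Real.exp (-y0) ^ n := by
      apply summable_pow_mul_geometric_of_norm_lt_one
      rw [Real.norm_eq_abs, abs_of_pos hr0]
      exact hr1
    have hshift : Summable fun n : ℕ => (((n+1:ℕ)):ℝ)^(2*p) * Real.exp (-y0) ^ (n+1) :=
      (summable_nat_add_iff (f := fun n : ℕ => ((n:ℝ))^(2*p) * Real.exp (-y0) ^ n) 1).mpr hbase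
    refine (hshift.mul_left C).congr fun n => ?_
    push_cast
    ring
  -- positivity facts
  have ha_pos : ∀ n : ℕ, (0:ℝ) < (n:ℝ) + 1 := fun n => by positivity
  have hat : ∀ (n : ℕ) (t : ℝ), t ∈ Set.Ioi y0 → y0 ≤ ((n:ℝ)+1) * t := by
    intro n t ht
    simp only [Set.mem_Ioi] at ht
    have h1 : (1:ℝ) ≤ (n:ℝ)+1 := by
      have := Nat.cast_nonneg (α := ℝ) n
      linarith
    nlinarith
  have hsinh_pos : ∀ (n : ℕ) (t : ℝ), t ∈ Set.Ioi y0 → 0 < Real.sinh (((n:ℝ)+1) * t) := by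
    intro n t ht
    rw [Real.sinh_pos_iff]
    have := hat n t ht
    linarith
  -- derivative of each term
  have hderiv : ∀ (n : ℕ), ∀ t ∈ Set.Ioi y0,
      HasDerivAt (fun z : ℝ => ((n:ℝ) + 1) ^ (2 * p - 1) / Real.sinh (((n:ℝ) + 1) * z))
        (-(((n:ℝ) + 1) ^ (2 * p) * Real.cosh (((n:ℝ) + 1) * t) /
          Real.sinh (((n:ℝ) + 1) * t) ^ 2)) t := by
    intro n t ht
    have hinner : HasDerivAt (fun z : ℝ => ((n:ℝ)+1) * z) ((n:ℝ)+1) t := by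
      simpa using (hasDerivAt_id t).const_mul ((n:ℝ)+1)
    have hsinh : HasDerivAt (fun z : ℝ => Real.sinh (((n:ℝ)+1) * z))
        (Real.cosh (((n:ℝ)+1) * t) * ((n:ℝ)+1)) t :=
      (Real.hasDerivAt_sinh _).comp t hinner
    have hne : Real.sinh (((n:ℝ)+1) * t) ≠ 0 := ne_of_gt (hsinh_pos n t ht)
    have hdiv := (hasDerivAt_const t (((n:ℝ)+1)^(2*p-1))).div hsinh hne
    refine HasDerivAt.congr_deriv hdiv ?_
    rw [show ((n:ℝ)+1)^(2*p) = ((n:ℝ)+1)^(2*p-1) * ((n:ℝ)+1) from by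
      rw [← pow_succ]; congr 1; omega]
    ring
  -- bound on derivatives
  have hbound : ∀ (n : ℕ), ∀ t ∈ Set.Ioi y0,
      ‖-(((n:ℝ) + 1) ^ (2 * p) * Real.cosh (((n:ℝ) + 1) * t) /
        Real.sinh (((n:ℝ) + 1) * t) ^ 2)‖ ≤ C * (((n:ℝ)+1)^(2*p) * Real.exp (-y0) ^ (n+1)) := by
    intro n t ht
    have hat' := hat n t ht
    have hcs := bound_cosh_div_sinh_sq hy0 hat'
    have hs := hsinh_pos n t ht
    have hch : 0 < Real.cosh (((n:ℝ)+1)*t) := Real.cosh_pos _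
    have hexp : Real.exp (-(((n:ℝ)+1)*t)) ≤ Real.exp (-y0) ^ (n+1) := by
      rw [← Real.exp_nat_mul]
      apply Real.exp_le_exp.mpr
      push_cast
      nlinarith [mul_nonneg (by positivity : (0:ℝ) ≤ (n:ℝ)+1)
        (by linarith [Set.mem_Ioi.mp ht] : (0:ℝ) ≤ t - y0)]
    rw [norm_neg, Real.norm_eq_abs, abs_of_nonneg (by positivity)]
    rw [mul_div_assoc]
    calc ((n:ℝ)+1)^(2*p) * (Real.cosh (((n:ℝ)+1)*t) / Real.sinh (((n:ℝ)+1)*t)^2)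
        ≤ ((n:ℝ)+1)^(2*p) * (C * Real.exp (-(((n:ℝ)+1)*t))) := by
          apply mul_le_mul_of_nonneg_left _ (by positivity)
          rw [hC_def, hq_def]
          exact hcs
      _ ≤ ((n:ℝ)+1)^(2*p) * (C * Real.exp (-y0) ^ (n+1)) := by
          apply mul_le_mul_of_nonneg_left _ (by positivity)
          exact mul_le_mul_of_nonneg_left hexp hC.le
      _ = C * (((n:ℝ)+1)^(2*p) * Real.exp (-y0) ^ (n+1)) := by ring
  -- summability at the point y
  have hsum0 : Summable fun n : ℕ => ((n:ℝ) + 1) ^ (2 * p - 1) / Real.sinh (((n:ℝ) + 1) * y) := by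
    apply Summable.of_norm_bounded
      (g := fun n : ℕ => (2/(1-q)) * (((n:ℝ)+1)^(2*p-1) * Real.exp (-y0) ^ (n+1)))
    · have hbase : Summable fun n : ℕ => ((n:ℝ))^(2*p-1) * Real.exp (-y0) ^ n := by
        apply summable_pow_mul_geometric_of_norm_lt_one
        rw [Real.norm_eq_abs, abs_of_pos hr0]
        exact hr1
      have hshift : Summable fun n : ℕ => (((n+1:ℕ)):ℝ)^(2*p-1) * Real.exp (-y0) ^ (n+1) :=
        (summable_nat_add_iff (f := fun n : ℕ => ((n:ℝ))^(2*p-1) * Real.exp (-y0) ^ n) 1).mpr hbase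
      refine (hshift.mul_left (2/(1-q))).congr fun n => ?_
      push_cast
      ring
    · intro n
      have hat' := hat n y hyy
      have hs := hsinh_pos n y hyy
      have hlow := sinh_lower hy0 hat'
      rw [hq_def] at hq1 hq0 ⊢
      have hexp : Real.exp (-(((n:ℝ)+1)*y)) ≤ Real.exp (-y0) ^ (n+1) := by
        rw [← Real.exp_nat_mul]
        apply Real.exp_le_exp.mpr
        push_cast
        nlinarith [mul_nonneg (by positivity : (0:ℝ) ≤ (n:ℝ)+1)
          (by linarith [Set.mem_Ioi.mp hyy] : (0:ℝ) ≤ y - y0)]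
      have he_pos := Real.exp_pos (((n:ℝ)+1)*y)
      have h1q : (0:ℝ) < 1 - Real.exp (-2*y0) := by linarith
      rw [Real.norm_eq_abs, abs_of_nonneg (by positivity)]
      have hsinh_low : Real.exp (((n:ℝ)+1)*y) * (1 - Real.exp (-2*y0)) / 2
          ≤ Real.sinh (((n:ℝ)+1)*y) := hlow
      have hlow0 : 0 < Real.exp (((n:ℝ)+1)*y) * (1 - Real.exp (-2*y0)) / 2 := by positivity
      calc ((n:ℝ)+1)^(2*p-1) / Real.sinh (((n:ℝ)+1)*y)
          ≤ ((n:ℝ)+1)^(2*p-1) / (Real.exp (((n:ℝ)+1)*y) * (1 - Real.exp (-2*y0)) / 2) := by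
            apply div_le_div_of_nonneg_left (by positivity) hlow0 hsinh_low
        _ = (2/(1 - Real.exp (-2*y0))) * (((n:ℝ)+1)^(2*p-1) * Real.exp (-(((n:ℝ)+1)*y))) := by
            rw [Real.exp_neg]
            field_simp
        _ ≤ (2/(1 - Real.exp (-2*y0))) * (((n:ℝ)+1)^(2*p-1) * Real.exp (-y0) ^ (n+1)) := by
            apply mul_le_mul_of_nonneg_left _ (by positivity)
            exact mul_le_mul_of_nonneg_left hexp (by positivity)
  exact hasDerivAt_tsum_of_isPreconnected hu isOpen_Ioi isPreconnected_Ioi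
    hderiv hbound hyy hsum0 hyy

theorem deriv_yfun_and_sinh_series (x : ℝ) (hx : x ∈ Set.Ioo (0 : ℝ) 1) :
    deriv yfun x = -(1 / (x * (1 - x) * zfun x ^ 2)) ∧
      ∀ p : ℕ, 1 ≤ p →
        ∑' n : ℕ,
            (n + 1 : ℝ) ^ (2 * p) * Real.cosh ((n + 1) * yfun x) /
              Real.sinh ((n + 1) * yfun x) ^ 2 =
          x * (1 - x) * zfun x ^ 2 *
            deriv (fun t : ℝ =>
              ∑' n : ℕ, (n + 1 : ℝ) ^ (2 * p - 1) / Real.sinh ((n + 1) * yfun t)) x := by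
  constructor
  · exact (hasDerivAt_yfun hx).deriv
  · intro p hp
    have hy := yfun_pos hx
    have hG := sinh_series_deriv hy p hp
    have hy' := hasDerivAt_yfun hx
    have hcomp : HasDerivAt (fun t : ℝ =>
        ∑' n : ℕ, (n + 1 : ℝ) ^ (2 * p - 1) / Real.sinh ((n + 1) * yfun t))
        ((∑' n : ℕ, -(((n:ℝ) + 1) ^ (2 * p) * Real.cosh (((n:ℝ) + 1) * yfun x) /
          Real.sinh (((n:ℝ) + 1) * yfun x) ^ 2)) * (-(1 / (x * (1 - x) * zfun x ^ 2)))) x :=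
      hG.comp x hy'
    rw [hcomp.deriv, tsum_neg]
    have h1 : 0 < zfun x := zfun_pos hx.1.le hx.2
    have hx1 : 0 < 1 - x := by linarith [hx.2]
    have hx0 := hx.1
    have hne : x * (1 - x) * zfun x ^ 2 ≠ 0 := by positivity
    field_simp
    exact tsum_congr fun n => by rw [mul_comm (yfun x)]
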